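/- Let Σ be an n×n signature matrix with finite value Val(Σ), and c, d valid offsets satisfying Val(Σ) = Σ_j d_j − Σ_i c_i and Σ_{ij} ≤ d_j − c_i for all i,j. Fix a row index l, and let Σ̄ agree with Σ on all rows i ≠ l, while Σ̄_{lj} < d_j − c_l for all j. Then Val(Σ̄) < Val(Σ). -/

import Mathlib

/-- The value of a signature matrix: the maximum over all transversals
(permutations) of the sum of the entries on the transversal. -/
noncomputable def sigVal {n : ℕ} (S : Matrix (Fin n) (Fin n) (WithBot ℤ)) : WithBot ℤ :=
  Finset.univ.sup' Finset.univ_nonempty (fun σ : Equiv.Perm (Fin n) => ∑ i, S i (σ i))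

private lemma lt_coe_iff_le_pred (a : WithBot ℤ) (m : ℤ) :
    a < (m : WithBot ℤ) ↔ a ≤ ((m - 1 : ℤ) : WithBot ℤ) := by
  cases a with
  | bot => simp
  | coe k =>
    rw [WithBot.coe_lt_coe, WithBot.coe_le_coe]
    omega

private lemma coe_sum {α : Type*} [DecidableEq α] (s : Finset α) (f : α → ℤ) :
    ((∑ i ∈ s, f i : ℤ) : WithBot ℤ) = ∑ i ∈ s, ((f i : ℤ) : WithBot ℤ) := by
  induction s using Finset.induction with
  | empty => simp
  | insert _ _ h ih => simp [Finset.sum_insert h, WithBot.coe_add, ih]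

theorem stmt1 {n : ℕ} (S Sb : Matrix (Fin n) (Fin n) (WithBot ℤ)) (c d : Fin n → ℤ)
    (l : Fin n)
    (hvalid : ∀ i j, S i j ≤ ((d j - c i : ℤ) : WithBot ℤ))
    (hfin : sigVal S = (((∑ j, d j) - ∑ i, c i : ℤ) : WithBot ℤ))
    (hrow : ∀ i, i ≠ l → ∀ j, Sb i j = S i j)
    (hl : ∀ j, Sb l j < ((d j - c l : ℤ) : WithBot ℤ)) :
    sigVal Sb < sigVal S := by
  rw [sigVal, Finset.sup'_lt_iff]
  intro σ _
  rw [hfin]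
  have h1 : ∑ i, Sb i (σ i) ≤
      ∑ i, ((if i = l then d (σ i) - c i - 1 else d (σ i) - c i : ℤ) : WithBot ℤ) := by
    refine Finset.sum_le_sum fun i _ => ?_
    by_cases hi : i = l
    · subst hi
      simp only [if_pos rfl]
      exact (lt_coe_iff_le_pred _ _).mp (hl (σ i))
    · rw [if_neg hi, hrow i hi]
      exact hvalid i (σ i)
  refine lt_of_le_of_lt h1 ?_
  rw [← coe_sum, WithBot.coe_lt_coe]
  have h2 : ∑ i, (if i = l then d (σ i) - c i - 1 else d (σ i) - c i) =
      (∑ i, (d (σ i) - c i)) - 1 := by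
    have he : ∀ i, (if i = l then d (σ i) - c i - 1 else d (σ i) - c i) =
        (d (σ i) - c i) - (if i = l then 1 else 0) := by intro i; split <;> ring
    simp [he, Finset.sum_sub_distrib]
  rw [h2, Finset.sum_sub_distrib, Equiv.sum_comp σ d]
  omega
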